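/- (CPP, geometric form in the plane) Let l₁, l₂ be two nonparallel lines meeting at E, let A ∈ l₁, B ∈ l₂, and let O be an interior point of segment [AB]. Suppose the perpendicular to l₁ at A, the perpendicular to l₂ at B, and the perpendicular to line AB at O all pass through a common point C. Then, writing E' for the foot of the perpendicular from E to line AB, one has |BE'| = |AO|. -/
import Mathlib


open RealInnerProductSpace

/-- (CPP, geometric form in the plane.) Let `l₁ = EA`, `l₂ = EB` be nonparallel
lines meeting at `E`, let `O` lie strictly between `A` and `B`, and suppose the
perpendicular to `l₁` at `A`, the perpendicular to `l₂` at `B` and the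
perpendicular to line `AB` at `O` pass through a common point `C`. If `E'` is
the foot of the perpendicular from `E` to line `AB`, then `|BE'| = |AO|`. -/
theorem statement6 (E A B O C E' : EuclideanSpace ℝ (Fin 2))
    (hA : A ≠ E) (hB : B ≠ E)
    (hncol : ¬ Collinear ℝ ({E, A, B} : Set (EuclideanSpace ℝ (Fin 2))))
    (hO : O ∈ openSegment ℝ A B)
    (hperp1 : ⟪C - A, A - E⟫ = 0)
    (hperp2 : ⟪C - B, B - E⟫ = 0)
    (hperpO : ⟪C - O, B - A⟫ = 0)
    (hE'mem : ∃ t : ℝ, E' = A + t • (B - A))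
    (hE'perp : ⟪E - E', B - A⟫ = 0) :
    dist B E' = dist A O := by
  have hAB : A ≠ B := by
    rintro rfl
    exact hncol (by simpa using collinear_pair ℝ E A)
  rw [openSegment_eq_image'] at hO
  obtain ⟨s, hs, rfl⟩ := hO
  obtain ⟨t, rfl⟩ := hE'mem
  set u := B - A with hu
  have hu0 : ⟪u, u⟫ ≠ 0 := fun h =>
    hAB ((sub_eq_zero.mp (inner_self_eq_zero.mp h)).symm)
  -- expand the perpendicularity conditions
  have eO : ⟪C - A, u⟫ - s * ⟪u, u⟫ = 0 := by
    have := hperpO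
    rw [show C - (A + s • u) = (C - A) - s • u by abel, inner_sub_left,
      real_inner_smul_left] at this
    linarith
  have et : ⟪E - A, u⟫ - t * ⟪u, u⟫ = 0 := by
    have := hE'perp
    rw [show E - (A + t • u) = (E - A) - t • u by abel, inner_sub_left,
      real_inner_smul_left] at this
    linarith
  have e2 : ⟪C - A, A - E⟫ + ⟪C - A, u⟫ - ⟪u, A - E⟫ - ⟪u, u⟫ = 0 := by
    have := hperp2
    rw [show C - B = (C - A) - u by rw [hu]; abel,
      show B - E = (A - E) + u by rw [hu]; abel,
      inner_sub_left, inner_add_right, inner_add_right] at this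
    linarith
  have huAE : ⟪u, A - E⟫ = -⟪E - A, u⟫ := by
    rw [real_inner_comm, show A - E = -(E - A) by abel, inner_neg_left]
  have hst : s + t = 1 := by
    rw [hperp1, huAE] at e2
    have : (s + t - 1) * ⟪u, u⟫ = 0 := by ring_nf; nlinarith [eO, et, e2]
    rcases mul_eq_zero.mp this with h | h
    · linarith
    · exact absurd h hu0
  have h1 : B - (A + t • u) = (1 - t) • u := by
    rw [hu]; module
  have h2 : A - (A + s • u) = (-s) • u := by module
  rw [dist_eq_norm, dist_eq_norm, h1, h2, norm_smul, norm_smul]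
  congr 1
  simp only [Real.norm_eq_abs]
  rw [show (1 : ℝ) - t = s by linarith]
  rw [abs_neg]
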